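/- There exists a 6×8 protograph P with all entries in {0,1,2} such that P is (3,4)-regular (every column sums to 3 and every row sums to 4), P has exactly 6 entries equal to 2, and P avoids inevitable cycles of length less than 12, i.e., P contains none of the ICI patterns of length 6, 8, or 10 (nor their transposes). -/

import Mathlib

open Matrix Finset

/-- `P` has `Q` as a (row/column-permuted) entrywise sub-pattern. -/
def containsSub {J L m n : ℕ} (P : Matrix (Fin J) (Fin L) ℕ)
    (Q : Matrix (Fin m) (Fin n) ℕ) : Prop :=
  ∃ r : Fin m → Fin J, ∃ c : Fin n → Fin L,
    Function.Injective r ∧ Function.Injective c ∧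
    ∀ i j, Q i j ≤ P (r i) (c j)

/-- `P` contains the pattern `Q` or its transpose. -/
def containsPat {J L m n : ℕ} (P : Matrix (Fin J) (Fin L) ℕ)
    (Q : Matrix (Fin m) (Fin n) ℕ) : Prop :=
  containsSub P Q ∨ containsSub P Qᵀ

/-- ICI pattern of length 6. -/
def pat6 : Matrix (Fin 1) (Fin 1) ℕ := !![3]
/-- ICI pattern of length 8. -/
def pat8 : Matrix (Fin 1) (Fin 2) ℕ := !![2, 2]
/-- ICI pattern of length 10. -/
def pat10 : Matrix (Fin 2) (Fin 2) ℕ := !![2, 1; 1, 1]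
/-- First ICI pattern of length 12. -/
def pat12a : Matrix (Fin 2) (Fin 2) ℕ := !![2, 1; 0, 2]
/-- Second ICI pattern of length 12. -/
def pat12b : Matrix (Fin 2) (Fin 3) ℕ := !![2, 1, 1; 0, 1, 1]
/-- Third ICI pattern of length 12 (the 2×3 all-ones matrix). -/
def pat12c : Matrix (Fin 2) (Fin 3) ℕ := !![1, 1, 1; 1, 1, 1]

/-- `P` avoids inevitable cycles of length `< 10`. -/
def avoidsLt10 {J L : ℕ} (P : Matrix (Fin J) (Fin L) ℕ) : Prop :=
  ¬ containsPat P pat6 ∧ ¬ containsPat P pat8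

/-- `P` avoids inevitable cycles of length `< 12`. -/
def avoidsLt12 {J L : ℕ} (P : Matrix (Fin J) (Fin L) ℕ) : Prop :=
  avoidsLt10 P ∧ ¬ containsPat P pat10

/-- `P` avoids inevitable cycles of length `< 14`. -/
def avoidsLt14 {J L : ℕ} (P : Matrix (Fin J) (Fin L) ℕ) : Prop :=
  avoidsLt12 P ∧ ¬ containsPat P pat12a ∧ ¬ containsPat P pat12b ∧ ¬ containsPat P pat12c

/-- The number of entries of `P` equal to `2`. -/
def numTwos {J L : ℕ} (P : Matrix (Fin J) (Fin L) ℕ) : ℕ :=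
  (Finset.univ.filter (fun p : Fin J × Fin L => P p.1 p.2 = 2)).card

/-- `P` is `(d_v, d_c)`-regular: every column sums to `d_v`, every row to `d_c`. -/
def protoRegular {J L : ℕ} (P : Matrix (Fin J) (Fin L) ℕ) (dv dc : ℕ) : Prop :=
  (∀ l : Fin L, ∑ j : Fin J, P j l = dv) ∧ (∀ j : Fin J, ∑ l : Fin L, P j l = dc)

def Mex : Matrix (Fin 6) (Fin 8) ℕ :=
  !![1,0,1,0,0,0,0,2; 1,0,0,1,0,0,2,0; 0,1,1,0,2,0,0,0;
     0,0,0,2,1,0,0,1; 0,2,0,0,0,1,1,0; 1,0,1,0,0,2,0,0]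

lemma Mex_le2 : ∀ i j, Mex i j ≤ 2 := by intro i j; fin_cases i <;> fin_cases j <;> decide

lemma Mex_row : ∀ (i : Fin 6) (j k : Fin 8), j ≠ k → ¬(2 ≤ Mex i j ∧ 2 ≤ Mex i k) := by intro i; fin_cases i <;> decide

lemma Mex_col : ∀ (j : Fin 8) (i k : Fin 6), i ≠ k → ¬(2 ≤ Mex i j ∧ 2 ≤ Mex k j) := by decide

lemma Mex_p10 : ∀ (i₁ i₂ : Fin 6) (j₁ j₂ : Fin 8), i₁ ≠ i₂ → j₁ ≠ j₂ →
    ¬(2 ≤ Mex i₁ j₁ ∧ 1 ≤ Mex i₁ j₂ ∧ 1 ≤ Mex i₂ j₁ ∧ 1 ≤ Mex i₂ j₂) := by intro i₁ i₂; fin_cases i₁ <;> fin_cases i₂ <;> decide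

theorem stmt_14 :
    ∃ P : Matrix (Fin 6) (Fin 8) ℕ,
      (∀ i j, P i j ≤ 2) ∧
      protoRegular P 3 4 ∧
      numTwos P = 6 ∧
      avoidsLt12 P := by
  refine ⟨Mex, Mex_le2, ⟨by decide, by decide⟩, by decide, ⟨⟨?_, ?_⟩, ?_⟩⟩
  · rintro (⟨r, c, hr, hc, h⟩ | ⟨r, c, hr, hc, h⟩) <;>
    · have h3 := h 0 0
      have := Mex_le2 (r 0) (c 0)
      have : (3 : ℕ) ≤ Mex (r 0) (c 0) := h3
      omega
  · rintro (⟨r, c, hr, hc, h⟩ | ⟨r, c, hr, hc, h⟩)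
    · exact Mex_row (r 0) (c 0) (c 1) (fun e => absurd (hc e) (by decide)) ⟨h 0 0, h 0 1⟩
    · exact Mex_col (c 0) (r 0) (r 1) (fun e => absurd (hr e) (by decide)) ⟨h 0 0, h 1 0⟩
  · rintro (⟨r, c, hr, hc, h⟩ | ⟨r, c, hr, hc, h⟩) <;>
    · exact Mex_p10 (r 0) (r 1) (c 0) (c 1)
        (fun e => absurd (hr e) (by decide)) (fun e => absurd (hc e) (by decide))
        ⟨h 0 0, h 0 1, h 1 0, h 1 1⟩
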